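/- Let n ≥ 2. In the Euclidean space of real-valued functions on the set of pairs (i, j) with i < j in Fin n, let v_σ denote the vector associated to a permutation σ of Fin n by (v_σ)_{ij} = 1 if σ⁻¹(i) < σ⁻¹(j) and 0 otherwise, and let v_p denote the vector associated to a positive probability vector p on Fin n by (v_p)_{ij} = p(i)/(p(i)+p(j)). Then the convex hull of {v_σ : σ a permutation of Fin n} is contained in the closure of the convex hull of {v_p : p a positive probability vector on Fin n}. -/

import Mathlib

open Filter Topology

lemma key_tendsto (a b : ℕ) (hab : a ≠ b) :
    Tendsto (fun t : ℝ => t ^ a / (t ^ a + t ^ b)) (𝓝[>] (0:ℝ))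
      (𝓝 (if a < b then (1:ℝ) else 0)) := by
  rcases lt_or_gt_of_ne hab with h | h
  · rw [if_pos h]
    have heq : ∀ᶠ t in 𝓝[>] (0:ℝ),
        t ^ a / (t ^ a + t ^ b) = 1 / (1 + t ^ (b - a)) := by
      filter_upwards [self_mem_nhdsWithin] with t (ht : (0:ℝ) < t)
      have h2 : t ^ b = t ^ a * t ^ (b - a) := by
        rw [← pow_add]; congr 1; omega
      have h3 : t ^ a ≠ 0 := pow_ne_zero _ ht.ne'
      have h4 : (1:ℝ) + t ^ (b-a) ≠ 0 := by positivity
      rw [h2]; field_simp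
    rw [tendsto_congr' heq]
    have h1 : Tendsto (fun t : ℝ => t ^ (b - a)) (𝓝[>] 0) (𝓝 0) := by
      have := (continuous_pow (b - a)).tendsto (0:ℝ)
      rw [zero_pow (by omega : b - a ≠ 0)] at this
      exact this.mono_left nhdsWithin_le_nhds
    have h5 : Tendsto (fun t : ℝ => 1 / (1 + t ^ (b - a))) (𝓝[>] 0) (𝓝 (1 / (1 + 0))) :=
      Tendsto.div tendsto_const_nhds (tendsto_const_nhds.add h1) (by norm_num)
    norm_num at h5; exact h5.congr (fun t => by norm_num)
  · rw [if_neg (not_lt.2 h.le)]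
    have heq : ∀ᶠ t in 𝓝[>] (0:ℝ),
        t ^ a / (t ^ a + t ^ b) = t ^ (a - b) / (t ^ (a - b) + 1) := by
      filter_upwards [self_mem_nhdsWithin] with t (ht : (0:ℝ) < t)
      have h2 : t ^ a = t ^ (a - b) * t ^ b := by
        rw [← pow_add]; congr 1; omega
      have h3 : t ^ b ≠ 0 := pow_ne_zero _ ht.ne'
      have h4 : t ^ (a-b) + (1:ℝ) ≠ 0 := by positivity
      rw [h2]; field_simp
    rw [tendsto_congr' heq]
    have h1 : Tendsto (fun t : ℝ => t ^ (a - b)) (𝓝[>] 0) (𝓝 0) := by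
      have := (continuous_pow (a - b)).tendsto (0:ℝ)
      rw [zero_pow (by omega : a - b ≠ 0)] at this
      exact this.mono_left nhdsWithin_le_nhds
    have h5 : Tendsto (fun t : ℝ => t ^ (a-b) / (t ^ (a-b) + 1)) (𝓝[>] 0) (𝓝 (0 / (0 + 1))) :=
      Tendsto.div h1 (h1.add tendsto_const_nhds) (by norm_num)
    norm_num at h5; exact h5.congr (fun t => by norm_num)

theorem linear_ordering_polytope_subset_closure_expert_vectors (n : ℕ) (hn : 2 ≤ n) :
    convexHull ℝ
      {v : EuclideanSpace ℝ {q : Fin n × Fin n // q.1 < q.2} |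
        ∃ σ : Equiv.Perm (Fin n),
          ∀ q : {q : Fin n × Fin n // q.1 < q.2},
            v q = if σ⁻¹ q.1.1 < σ⁻¹ q.1.2 then (1 : ℝ) else 0} ⊆
    closure (convexHull ℝ
      {v : EuclideanSpace ℝ {q : Fin n × Fin n // q.1 < q.2} |
        ∃ p : Fin n → ℝ, (∀ i, 0 < p i) ∧ (∑ i, p i = 1) ∧
          ∀ q : {q : Fin n × Fin n // q.1 < q.2},
            v q = p q.1.1 / (p q.1.1 + p q.1.2)}) := by
  set S := {v : EuclideanSpace ℝ {q : Fin n × Fin n // q.1 < q.2} |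
        ∃ p : Fin n → ℝ, (∀ i, 0 < p i) ∧ (∑ i, p i = 1) ∧
          ∀ q : {q : Fin n × Fin n // q.1 < q.2},
            v q = p q.1.1 / (p q.1.1 + p q.1.2)} with hS
  apply convexHull_min ?_ ((convex_convexHull ℝ S).closure)
  rintro v ⟨σ, hσ⟩
  refine closure_mono (subset_convexHull ℝ S) ?_
  set f : ℝ → EuclideanSpace ℝ {q : Fin n × Fin n // q.1 < q.2} :=
    fun t => WithLp.toLp 2 (fun q : {q : Fin n × Fin n // q.1 < q.2} => t ^ ((σ⁻¹ q.1.1 : Fin n) : ℕ) /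
      (t ^ ((σ⁻¹ q.1.1 : Fin n) : ℕ) + t ^ ((σ⁻¹ q.1.2 : Fin n) : ℕ))) with hf
  have hmem : ∀ t : ℝ, 0 < t → t < 1 → f t ∈ S := by
    intro t ht ht1
    have hZpos : 0 < ∑ i : Fin n, t ^ ((σ⁻¹ i : Fin n) : ℕ) := by
      apply Finset.sum_pos
      · intro i _; positivity
      · exact Finset.univ_nonempty_iff.2 ⟨⟨0, by omega⟩⟩
    set Z := ∑ i : Fin n, t ^ ((σ⁻¹ i : Fin n) : ℕ) with hZ
    refine ⟨fun i => t ^ ((σ⁻¹ i : Fin n) : ℕ) / Z, fun i => by positivity, ?_, ?_⟩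
    · rw [← Finset.sum_div, div_self hZpos.ne']
    · intro q
      show t ^ ((σ⁻¹ q.1.1 : Fin n) : ℕ) /
          (t ^ ((σ⁻¹ q.1.1 : Fin n) : ℕ) + t ^ ((σ⁻¹ q.1.2 : Fin n) : ℕ)) = _
      have hd : (0:ℝ) < t ^ ((σ⁻¹ q.1.1 : Fin n) : ℕ) + t ^ ((σ⁻¹ q.1.2 : Fin n) : ℕ) := by
        positivity
      field_simp
  have hne : ∀ q : {q : Fin n × Fin n // q.1 < q.2},
      ((σ⁻¹ q.1.1 : Fin n) : ℕ) ≠ ((σ⁻¹ q.1.2 : Fin n) : ℕ) := by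
    intro q h
    exact absurd (σ⁻¹.injective (Fin.val_injective h)) (ne_of_lt q.2)
  have htend : Tendsto f (𝓝[>] (0:ℝ)) (𝓝 v) := by
    rw [((PiLp.continuousLinearEquiv 2 ℝ _).toHomeomorph.isEmbedding).tendsto_nhds_iff]
    rw [tendsto_pi_nhds]
    intro q
    have hkey := key_tendsto _ _ (hne q)
    have hv : ((PiLp.continuousLinearEquiv 2 ℝ _).toHomeomorph v) q
        = if ((σ⁻¹ q.1.1 : Fin n) : ℕ) < ((σ⁻¹ q.1.2 : Fin n) : ℕ) then (1:ℝ) else 0 := by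
      show v q = _
      rw [hσ q]; simp only [Fin.lt_def]
    rw [hv]
    exact hkey
  have hev : ∀ᶠ t in 𝓝[>] (0:ℝ), f t ∈ S := by
    have h2 : Set.Ioo (0:ℝ) 1 ∈ 𝓝[>] (0:ℝ) :=
      Ioo_mem_nhdsGT_of_mem (by norm_num : (0:ℝ) ∈ Set.Ico (0:ℝ) 1)
    filter_upwards [h2] with t ht
    exact hmem t ht.1 ht.2
  exact mem_closure_of_tendsto htend hev
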